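/- Let g : ℝ^d → ℝ be C² with ∇g(x) ≠ 0, D(x) = I - ∇g(x)∇g(x)ᵀ/‖∇g(x)‖², and r(x) = ∇·D(x). Then ⟨∇g(x), r(x)⟩ + tr(D(x) ∇²g(x) D(x)) = 0. -/

import Mathlib

open scoped RealInnerProductSpace

theorem stmt_5 (d : ℕ) (g : EuclideanSpace ℝ (Fin d) → ℝ)
    (x : EuclideanSpace ℝ (Fin d))
    (hg : ContDiff ℝ 2 g)
    (hn : ∀ y, gradient g y ≠ 0)
    (D : EuclideanSpace ℝ (Fin d) → Matrix (Fin d) (Fin d) ℝ)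
    (hD : ∀ y, D y = 1 - (‖gradient g y‖ ^ 2)⁻¹ •
      Matrix.vecMulVec (fun i => gradient g y i) (fun i => gradient g y i))
    (e : Fin d → EuclideanSpace ℝ (Fin d))
    (he : ∀ j, e j = EuclideanSpace.single j (1 : ℝ))
    (H : Matrix (Fin d) (Fin d) ℝ)
    (hH : ∀ i j, H i j = fderiv ℝ (fun y => fderiv ℝ g y (e j)) x (e i))
    (r : Fin d → ℝ)
    (hr : ∀ i, r i = ∑ j, fderiv ℝ (fun y => D y i j) x (e j)) :
    (∑ i, gradient g x i * r i) + Matrix.trace (D x * H * D x) = 0 := by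
  classical
  -- basic differentiability
  have hφ1 : ContDiff ℝ 1 (fderiv ℝ g) := hg.fderiv_right (le_refl _)
  have hφ : Differentiable ℝ (fderiv ℝ g) := hφ1.differentiable one_ne_zero
  set f2 := fderiv ℝ (fderiv ℝ g) x with hf2def
  set L : Fin d → (EuclideanSpace ℝ (Fin d) →L[ℝ] ℝ) :=
    fun i => (ContinuousLinearMap.apply ℝ ℝ (e i)).comp f2 with hLdef
  have hu : ∀ i, HasFDerivAt (fun y => fderiv ℝ g y (e i)) (L i) x := fun i =>
    (ContinuousLinearMap.apply ℝ ℝ (e i)).hasFDerivAt.comp x (hφ x).hasFDerivAt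
  have hHval : ∀ i j, H i j = f2 (e i) (e j) := by
    intro i j
    rw [hH, (hu j).fderiv]
    rfl
  have hsymm : ∀ i j, H i j = H j i := by
    intro i j
    rw [hHval, hHval]
    exact (hg.contDiffAt.isSymmSndFDerivAt (by norm_num)) _ _
  have hLe : ∀ i j, L i (e j) = H j i := by
    intro i j; rw [hHval]; rfl
  -- coordinates of the gradient
  have hgrad : ∀ (y : EuclideanSpace ℝ (Fin d)) i,
      gradient g y i = fderiv ℝ g y (e i) := by
    intro y i
    have h1 : gradient g y i = ⟪gradient g y, e i⟫ := by
      rw [he, EuclideanSpace.inner_single_right]; simp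
    rw [h1, he, gradient, InnerProductSpace.toDual_symm_apply]
  set a : Fin d → ℝ := fun i => fderiv ℝ g x (e i) with hadef
  set N : EuclideanSpace ℝ (Fin d) → ℝ :=
    fun y => ∑ k, fderiv ℝ g y (e k) * fderiv ℝ g y (e k) with hNdef
  have hNnorm : ∀ y, ‖gradient g y‖ ^ 2 = N y := by
    intro y
    rw [← real_inner_self_eq_norm_sq]
    rw [PiLp.inner_apply]
    simp [hgrad]
    rw [hNdef]; simp only [sq]
  have hNx : N x ≠ 0 := by
    rw [← hNnorm]
    simpa using hn x
  set N' : EuclideanSpace ℝ (Fin d) →L[ℝ] ℝ :=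
    ∑ k, (fderiv ℝ g x (e k) • L k + fderiv ℝ g x (e k) • L k) with hN'def
  have hN : HasFDerivAt N N' x :=
    by
      have := HasFDerivAt.sum (u := Finset.univ) fun k _ => (hu k).mul (hu k)
      exact this.congr_of_eventuallyEq (Filter.Eventually.of_forall fun y => by simp [hNdef])
  have hN'e : ∀ j, N' (e j) = ∑ k, 2 * (a k * H j k) := by
    intro j
    rw [hN'def]
    simp only [ContinuousLinearMap.sum_apply, ContinuousLinearMap.add_apply,
      ContinuousLinearMap.smul_apply, hLe]
    exact Finset.sum_congr rfl fun k _ => by push_cast [smul_eq_mul]; ring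
  have hDentry : ∀ (y : EuclideanSpace ℝ (Fin d)) i j, D y i j =
      (if i = j then (1:ℝ) else 0) -
        (N y)⁻¹ * (fderiv ℝ g y (e i) * fderiv ℝ g y (e j)) := by
    intro y i j
    rw [hD]
    simp [Matrix.sub_apply, Matrix.one_apply, Matrix.smul_apply, Matrix.vecMulVec_apply,
      hgrad, hNnorm, smul_eq_mul]
  set q' : Fin d → Fin d → (EuclideanSpace ℝ (Fin d) →L[ℝ] ℝ) := fun i j =>
    (N x)⁻¹ • (fderiv ℝ g x (e i) • L j + fderiv ℝ g x (e j) • L i) +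
      (fderiv ℝ g x (e i) * fderiv ℝ g x (e j)) • ((-(N x ^ 2)⁻¹) • N') with hq'def
  have hDderiv : ∀ i j, HasFDerivAt (fun y => D y i j) ((0 : _) - q' i j) x := by
    intro i j
    have hq : HasFDerivAt
        (fun y => (N y)⁻¹ * (fderiv ℝ g y (e i) * fderiv ℝ g y (e j))) (q' i j) x :=
      ((hasDerivAt_inv hNx).comp_hasFDerivAt x hN).mul ((hu i).mul (hu j))
    have := (hasFDerivAt_const (if i = j then (1:ℝ) else 0) x).sub hq
    refine this.congr_of_eventuallyEq ?_
    filter_upwards with y using (hDentry y i j)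
  have hrval : ∀ i, r i = ∑ j,
      ((N x ^ 2)⁻¹ * 2 * ((a i * a j) * (∑ k, a k * H j k))
        - (N x)⁻¹ * (a i * H j j + a j * H j i)) := by
    intro i
    rw [hr]
    refine Finset.sum_congr rfl fun j _ => ?_
    rw [(hDderiv i j).fderiv]
    simp only [ContinuousLinearMap.sub_apply, ContinuousLinearMap.zero_apply,
      ContinuousLinearMap.add_apply, ContinuousLinearMap.smul_apply, hq'def, hN'e, hLe,
      smul_eq_mul]
    rw [show (∑ k, 2 * (a k * H j k)) = 2 * ∑ k, a k * H j k by rw [Finset.mul_sum]]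
    ring
  set Q := N x with hQdef
  set S : ℝ := ∑ j, ∑ k, a j * (a k * H j k) with hSdef
  set T : ℝ := ∑ j, H j j with hTdef
  have hQsum : Q = ∑ i, a i * a i := rfl
  have claim1 : ∑ i, a i * r i
      = (Q ^ 2)⁻¹ * 2 * (Q * S) - Q⁻¹ * (Q * T) - Q⁻¹ * S := by
    have h1 : ∑ i, a i * r i = ∑ i, ∑ j,
        ((Q ^ 2)⁻¹ * 2 * ((a i * a i) * (a j * (∑ k, a k * H j k)))
          - Q⁻¹ * ((a i * a i) * H j j) - Q⁻¹ * (a i * (a j * H j i))) := by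
      refine Finset.sum_congr rfl fun i _ => ?_
      rw [hrval, Finset.mul_sum]
      refine Finset.sum_congr rfl fun j _ => ?_
      ring
    rw [h1]
    simp only [Finset.sum_sub_distrib]
    congr 1
    · congr 1
      · -- first double sum
        rw [hQsum, hSdef, Finset.sum_mul_sum]
        simp only [Finset.mul_sum]
      · -- second
        rw [hQsum, hTdef, Finset.sum_mul_sum]
        simp only [Finset.mul_sum]
    · -- third : uses symmetry
      rw [hSdef, Finset.mul_sum]
      refine Finset.sum_congr rfl fun i _ => ?_
      rw [Finset.mul_sum]
      refine Finset.sum_congr rfl fun j _ => ?_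
      rw [hsymm j i]
  have hDx : ∀ i j, D x i j = (if i = j then (1:ℝ) else 0) - Q⁻¹ * (a i * a j) :=
    fun i j => hDentry x i j
  have htr : Matrix.trace (D x * H * D x) = ∑ i, ∑ k, (∑ j, D x i j * H j k) * D x k i := by
    simp [Matrix.trace, Matrix.diag, Matrix.mul_apply]
  have h2 : ∀ i k, (∑ j, D x i j * H j k) = H i k - Q⁻¹ * (a i * ∑ j, a j * H j k) := by
    intro i k
    simp only [hDx, sub_mul, ite_mul, one_mul, zero_mul]
    rw [Finset.sum_sub_distrib]
    congr 1
    · simp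
    · rw [Finset.mul_sum, Finset.mul_sum]
      exact Finset.sum_congr rfl fun j _ => by ring
  have hfact : ∀ (i k : Fin d), ∑ j, Q⁻¹ * (a i * a j) * H j k
      = Q⁻¹ * (a i * ∑ j, a j * H j k) := by
    intro i k
    rw [Finset.mul_sum, Finset.mul_sum]
    exact Finset.sum_congr rfl fun j _ => by ring
  have h3 : Matrix.trace (D x * H * D x) =
      ∑ i, ((H i i - Q⁻¹ * (a i * ∑ j, a j * H j i))
        - ∑ k, ((H i k - Q⁻¹ * (a i * ∑ j, a j * H j k)) * (Q⁻¹ * (a k * a i)))) := by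
    rw [htr]
    refine Finset.sum_congr rfl fun i _ => ?_
    simp only [h2, hDx]
    simp only [mul_sub, mul_ite, mul_one, mul_zero, sub_mul, ite_mul, one_mul, zero_mul]
    rw [Finset.sum_sub_distrib]
    congr 1
    · rw [Finset.sum_ite_eq' Finset.univ i]
      simp only [Finset.mem_univ, if_true]
      rw [Finset.sum_sub_distrib, hfact i i]
      simp
    · refine Finset.sum_congr rfl fun k _ => ?_
      rw [Finset.sum_sub_distrib, hfact i k, Finset.sum_ite_eq Finset.univ i, sub_mul]
      simp
  have hS2 : ∑ k, a k * ∑ j, a j * H j k = S := by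
    have : S = ∑ k, ∑ j, a j * (a k * H j k) := hSdef.trans (Finset.sum_comm)
    rw [this]
    refine Finset.sum_congr rfl fun k _ => ?_
    rw [Finset.mul_sum]
    exact Finset.sum_congr rfl fun j _ => by ring
  have claim2 : Matrix.trace (D x * H * D x)
      = (T - Q⁻¹ * S) - (Q⁻¹ * S - (Q ^ 2)⁻¹ * (Q * S)) := by
    rw [h3, Finset.sum_sub_distrib]
    congr 1
    · rw [Finset.sum_sub_distrib]
      congr 1
      · -- Σ_i Q⁻¹ * (a i * Σ_j a j * H j i) = Q⁻¹ * S
        rw [hSdef, Finset.mul_sum]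
        refine Finset.sum_congr rfl fun i _ => ?_
        rw [show Q⁻¹ * (a i * ∑ j, a j * H j i) = ∑ j, Q⁻¹ * (a i * (a j * H j i)) by
          rw [Finset.mul_sum, Finset.mul_sum], Finset.mul_sum]
        refine Finset.sum_congr rfl fun j _ => ?_
        rw [hsymm j i]
    · simp only [sub_mul, Finset.sum_sub_distrib]
      congr 1
      · -- Σ_iΣ_k H i k * (Q⁻¹ * (a k * a i)) = Q⁻¹ * S
        rw [hSdef, Finset.mul_sum]
        refine Finset.sum_congr rfl fun i _ => ?_
        rw [Finset.mul_sum]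
        exact Finset.sum_congr rfl fun k _ => by ring
      · -- = (Q^2)⁻¹ * (Q * S)
        have step : ∀ i : Fin d, (∑ k, Q⁻¹ * (a i * ∑ j, a j * H j k) * (Q⁻¹ * (a k * a i)))
            = (Q ^ 2)⁻¹ * (a i * a i) * S := by
          intro i
          rw [← hS2, Finset.mul_sum]
          exact Finset.sum_congr rfl fun k _ => by ring
        calc (∑ i, ∑ k, Q⁻¹ * (a i * ∑ j, a j * H j k) * (Q⁻¹ * (a k * a i)))
            = ∑ i, (Q ^ 2)⁻¹ * (a i * a i) * S := Finset.sum_congr rfl fun i _ => step i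
          _ = (∑ i, a i * a i) * ((Q ^ 2)⁻¹ * S) := by
              rw [Finset.sum_mul]
              exact Finset.sum_congr rfl fun i _ => by ring
          _ = (Q ^ 2)⁻¹ * (Q * S) := by rw [← hQsum]; ring
  have hgr : ∑ i, gradient g x i * r i = ∑ i, a i * r i :=
    Finset.sum_congr rfl fun i _ => by rw [hgrad x i]
  rw [hgr, claim1, claim2]
  linear_combination (3 * Q⁻¹ * S - T) * inv_mul_cancel₀ hNx
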